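/- Let μ > 0 be a non-integer real number and let p ∈ V_μ with CDF F_n = ∑_{m≤n} p_m. If F_{⌊μ⌋} ≥ ⌊μ⌋+1−μ, then W1(p, p*) = 2 [ ∑_{n ≤ ⌊μ⌋} (⌊μ⌋+1−n) p_n − (⌊μ⌋+1−μ) ], and if F_{⌊μ⌋} < ⌊μ⌋+1−μ, then W1(p, p*) = 2 ∑_{n ≤ ⌊μ⌋} (⌊μ⌋−n) p_n, where p* is the shifted Bernoulli distribution with mean μ. -/

import Mathlib

set_option maxHeartbeats 800000


/-- Cumulative distribution function of a pmf on ℕ: `F n = ∑_{m ≤ n} p m`. -/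
noncomputable def cdf (p : ℕ → ℝ) (n : ℕ) : ℝ := ∑ m ∈ Finset.range (n + 1), p m

/-- Wasserstein-1 distance between two pmfs on ℕ, `W1(p,q) = ∑_{n ≥ 0} |F_n - H_n|`. -/
noncomputable def W1 (p q : ℕ → ℝ) : ℝ := ∑' n : ℕ, |cdf p n - cdf q n|

/-- Gini index of a pmf on ℕ with mean μ: `G[p] = (1/(2μ)) ∑_i ∑_j |i-j| p_i p_j`. -/
noncomputable def Gini (μ : ℝ) (p : ℕ → ℝ) : ℝ :=
  (1 / (2 * μ)) * ∑' i : ℕ, ∑' j : ℕ, |(i : ℝ) - (j : ℝ)| * p i * p j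

/-- The shifted Bernoulli distribution with mean μ:
`p*_{⌊μ⌋} = 1 - μ + ⌊μ⌋`, `p*_{⌊μ⌋+1} = μ - ⌊μ⌋`, `p*_n = 0` otherwise. -/
noncomputable def pstar (μ : ℝ) : ℕ → ℝ := fun n =>
  if n = ⌊μ⌋₊ then 1 - μ + (⌊μ⌋₊ : ℝ)
  else if n = ⌊μ⌋₊ + 1 then μ - (⌊μ⌋₊ : ℝ)
  else 0

/-- The Dirac distribution on ℕ concentrated at `k`. -/
noncomputable def dirac (k : ℕ) : ℕ → ℝ := fun n => if n = k then 1 else 0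

open Finset Filter Topology

lemma sum_cdf (p : ℕ → ℝ) (N : ℕ) :
    ∑ n ∈ range N, cdf p n = ∑ m ∈ range N, ((N : ℝ) - m) * p m := by
  induction N with
  | zero => simp
  | succ N ih =>
    rw [Finset.sum_range_succ, ih]
    have h : ∀ m ∈ range (N+1), ((((N:ℕ)+1 : ℕ) : ℝ) - m) * p m = ((N:ℝ) - m) * p m + p m := by
      intro m _; push_cast; ring
    rw [Finset.sum_congr rfl h, Finset.sum_add_distrib,
      Finset.sum_range_succ (f := fun m => ((N:ℝ) - m) * p m)]
    simp only [sub_self, zero_mul, add_zero]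
    rfl

lemma cdf_le_one (p : ℕ → ℝ) (hpos : ∀ n, 0 ≤ p n) (hsum : HasSum p 1) (n : ℕ) :
    cdf p n ≤ 1 := by
  have := Summable.sum_le_tsum (Finset.range (n+1)) (fun m _ => hpos m) hsum.summable
  rwa [hsum.tsum_eq] at this

lemma cdf_nonneg (p : ℕ → ℝ) (hpos : ∀ n, 0 ≤ p n) (n : ℕ) : 0 ≤ cdf p n :=
  Finset.sum_nonneg fun m _ => hpos m

lemma hasSum_one_sub_cdf (μ : ℝ) (p : ℕ → ℝ) (hpos : ∀ n, 0 ≤ p n) (hsum : HasSum p 1)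
    (hmean : HasSum (fun n : ℕ => (n : ℝ) * p n) μ) :
    HasSum (fun n => 1 - cdf p n) μ := by
  rw [hasSum_iff_tendsto_nat_of_nonneg
    (fun n => by linarith [cdf_le_one p hpos hsum n])]
  have key : ∀ N : ℕ, ∑ n ∈ range N, (1 - cdf p n)
      = (∑ m ∈ range N, (m : ℝ) * p m) + (N : ℝ) * ∑' m, p (m + N) := by
    intro N
    have hT : ∑' m, p (m + N) = 1 - ∑ m ∈ range N, p m := by
      have := Summable.sum_add_tsum_nat_add (f := p) N hsum.summable
      rw [hsum.tsum_eq] at this; linarith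
    rw [Finset.sum_sub_distrib, sum_cdf, hT]
    have : ∀ m ∈ range N, ((N:ℝ) - m) * p m = (N:ℝ) * p m - (m:ℝ) * p m :=
      fun m _ => by ring
    rw [Finset.sum_congr rfl this, Finset.sum_sub_distrib, ← Finset.mul_sum]
    simp only [Finset.sum_const, Finset.card_range, nsmul_eq_mul, mul_one]
    ring
  simp only [key]
  have h1 : Tendsto (fun N : ℕ => ∑ m ∈ range N, (m : ℝ) * p m) atTop (𝓝 μ) :=
    hmean.tendsto_sum_nat
  have h2 : Tendsto (fun N : ℕ => (N : ℝ) * ∑' m, p (m + N)) atTop (𝓝 0) := by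
    apply squeeze_zero (g := fun N : ℕ => μ - ∑ m ∈ range N, (m : ℝ) * p m)
    · intro N
      exact mul_nonneg (Nat.cast_nonneg N) (tsum_nonneg fun m => hpos _)
    · intro N
      have hs : Summable (fun m : ℕ => ((m : ℝ) + N) * p (m + N)) := by
        have h := (summable_nat_add_iff (f := fun n : ℕ => (n : ℝ) * p n) N).2 hmean.summable
        exact h.congr (fun m => by push_cast; ring)
      have hle : (N : ℝ) * ∑' m, p (m + N) ≤ ∑' m : ℕ, ((m : ℝ) + N) * p (m + N) := by
        rw [← tsum_mul_left]
        exact Summable.tsum_le_tsum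
          (fun m => mul_le_mul_of_nonneg_right (le_add_of_nonneg_left (Nat.cast_nonneg m)) (hpos _))
          (((summable_nat_add_iff N).2 hsum.summable).mul_left _) hs
      have heq : ∑' m : ℕ, ((m : ℝ) + N) * p (m + N) = μ - ∑ m ∈ range N, (m : ℝ) * p m := by
        have h := Summable.sum_add_tsum_nat_add (f := fun n : ℕ => (n : ℝ) * p n) N hmean.summable
        rw [hmean.tsum_eq] at h
        have h2 : ∑' m : ℕ, ((m : ℝ) + N) * p (m + N)
            = ∑' (m : ℕ), (fun n : ℕ => (n : ℝ) * p n) (m + N) :=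
          tsum_congr (fun m => by push_cast; ring)
        rw [h2]; linarith
      rw [← heq]; exact hle
    · have h3 : Tendsto (fun N : ℕ => μ - ∑ m ∈ range N, (m : ℝ) * p m) atTop (𝓝 (μ - μ)) :=
        tendsto_const_nhds.sub h1
      simpa using h3
  have := h1.add h2
  simpa using this

lemma cdf_pstar_lt (μ : ℝ) (n : ℕ) (hn : n < ⌊μ⌋₊) : cdf (pstar μ) n = 0 := by
  apply Finset.sum_eq_zero
  intro m hm
  rw [Finset.mem_range] at hm
  have h1 : m ≠ ⌊μ⌋₊ := by omega
  have h2 : m ≠ ⌊μ⌋₊ + 1 := by omega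
  simp [pstar, h1, h2]

lemma cdf_pstar_eq (μ : ℝ) : cdf (pstar μ) ⌊μ⌋₊ = 1 - μ + ⌊μ⌋₊ := by
  unfold cdf
  rw [Finset.sum_eq_single ⌊μ⌋₊]
  · simp [pstar]
  · intro m hm hne
    rw [Finset.mem_range] at hm
    have h2 : m ≠ ⌊μ⌋₊ + 1 := by omega
    simp [pstar, hne, h2]
  · intro h; exact absurd (Finset.self_mem_range_succ _) h

lemma cdf_pstar_gt (μ : ℝ) (n : ℕ) (hn : ⌊μ⌋₊ < n) : cdf (pstar μ) n = 1 := by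
  unfold cdf
  rw [← Finset.sum_subset (s₁ := {⌊μ⌋₊, ⌊μ⌋₊ + 1}) (by
      intro x hx
      simp only [Finset.mem_insert, Finset.mem_singleton] at hx
      rw [Finset.mem_range]; omega)
    (by
      intro x _ hx
      simp only [Finset.mem_insert, Finset.mem_singleton, not_or] at hx
      simp [pstar, hx.1, hx.2])]
  rw [Finset.sum_insert (by simp)]
  simp [pstar]

theorem stmt_13 (μ : ℝ) (hμ : 0 < μ) (hni : ∀ n : ℕ, μ ≠ (n : ℝ)) (p : ℕ → ℝ)
    (hpos : ∀ n, 0 ≤ p n) (hsum : HasSum p 1)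
    (hmean : HasSum (fun n : ℕ => (n : ℝ) * p n) μ) :
    (cdf p ⌊μ⌋₊ ≥ (⌊μ⌋₊ : ℝ) + 1 - μ →
      W1 p (pstar μ) =
        2 * ((∑ n ∈ Finset.range (⌊μ⌋₊ + 1), ((⌊μ⌋₊ : ℝ) + 1 - (n : ℝ)) * p n) -
          ((⌊μ⌋₊ : ℝ) + 1 - μ))) ∧
    (cdf p ⌊μ⌋₊ < (⌊μ⌋₊ : ℝ) + 1 - μ →
      W1 p (pstar μ) =
        2 * ∑ n ∈ Finset.range (⌊μ⌋₊ + 1), ((⌊μ⌋₊ : ℝ) - (n : ℝ)) * p n) := by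
  have hG := hasSum_one_sub_cdf μ p hpos hsum hmean
  have hfG : ∀ n, ⌊μ⌋₊ + 1 ≤ n → |cdf p n - cdf (pstar μ) n| = 1 - cdf p n := by
    intro n hn
    rw [cdf_pstar_gt μ n (by omega), abs_of_nonpos (by linarith [cdf_le_one p hpos hsum n])]
    ring
  have hf : Summable (fun n => |cdf p n - cdf (pstar μ) n|) := by
    apply (summable_nat_add_iff (⌊μ⌋₊ + 1)).1
    apply ((summable_nat_add_iff (⌊μ⌋₊ + 1)).2 hG.summable).congr
    intro n
    exact (hfG (n + (⌊μ⌋₊ + 1)) (by omega)).symm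
  have hsplit := Summable.sum_add_tsum_subtype_compl hf (range (⌊μ⌋₊ + 1))
  have hGsplit := Summable.sum_add_tsum_subtype_compl hG.summable (range (⌊μ⌋₊ + 1))
  rw [hG.tsum_eq] at hGsplit
  have hcompl : ∑' n : {x // x ∉ range (⌊μ⌋₊ + 1)}, |cdf p ↑n - cdf (pstar μ) ↑n|
      = ∑' n : {x // x ∉ range (⌊μ⌋₊ + 1)}, (1 - cdf p ↑n) := by
    apply tsum_congr
    rintro ⟨n, hn⟩
    rw [Finset.mem_range] at hn
    exact hfG n (by omega)
  have hW : W1 p (pstar μ) = ∑ n ∈ range (⌊μ⌋₊ + 1), |cdf p n - cdf (pstar μ) n|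
      + (μ - ∑ n ∈ range (⌊μ⌋₊ + 1), (1 - cdf p n)) := by
    rw [W1, ← hsplit, hcompl]
    linarith [hGsplit]
  have hsumS : ∑ n ∈ range (⌊μ⌋₊ + 1), (1 - cdf p n)
      = ((⌊μ⌋₊ : ℝ) + 1) - ∑ n ∈ range (⌊μ⌋₊ + 1), cdf p n := by
    rw [Finset.sum_sub_distrib]
    simp
  have hS : ∑ n ∈ range (⌊μ⌋₊ + 1), cdf p n
      = ∑ n ∈ range (⌊μ⌋₊ + 1), ((⌊μ⌋₊ : ℝ) + 1 - n) * p n := by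
    rw [sum_cdf]
    apply Finset.sum_congr rfl
    intro m _
    push_cast
    ring
  have hfin : ∑ n ∈ range (⌊μ⌋₊ + 1), |cdf p n - cdf (pstar μ) n|
      = ∑ n ∈ range ⌊μ⌋₊, cdf p n + |cdf p ⌊μ⌋₊ - (1 - μ + ⌊μ⌋₊)| := by
    rw [Finset.sum_range_succ, cdf_pstar_eq]
    congr 1
    apply Finset.sum_congr rfl
    intro n hn
    rw [Finset.mem_range] at hn
    rw [cdf_pstar_lt μ n hn, sub_zero, abs_of_nonneg (cdf_nonneg p hpos n)]
  have hrk : ∑ n ∈ range ⌊μ⌋₊, cdf p n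
      = ∑ n ∈ range (⌊μ⌋₊ + 1), cdf p n - cdf p ⌊μ⌋₊ := by
    rw [Finset.sum_range_succ]
    ring
  have hcdfk : ∑ n ∈ range (⌊μ⌋₊ + 1), p n = cdf p ⌊μ⌋₊ := rfl
  have hT2 : ∑ n ∈ range (⌊μ⌋₊ + 1), ((⌊μ⌋₊ : ℝ) - n) * p n
      = ∑ n ∈ range (⌊μ⌋₊ + 1), ((⌊μ⌋₊ : ℝ) + 1 - n) * p n - cdf p ⌊μ⌋₊ := by
    rw [← hcdfk, ← Finset.sum_sub_distrib]
    apply Finset.sum_congr rfl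
    intro n _
    ring
  constructor
  · intro h
    rw [hW, hfin, hsumS, hrk, abs_of_nonneg (by linarith), ← hS]
    ring
  · intro h
    rw [hW, hfin, hsumS, hrk, abs_of_nonpos (by linarith), hT2, ← hS]
    ring
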